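/- Let n ≥ r ≥ 2 and let A be an n×n nonnegative real matrix with all entries at most 1. If A is r-partite, then the trace norm of A is at most (n^(3/2)/2)·sqrt(1 - 1/r) + (1 - 1/r)·n. -/

import Mathlib

open Matrix BigOperators Kronecker

/-- The singular values of a square matrix `A` over an `RCLike` field: the square roots of the
eigenvalues of the Hermitian matrix `A * Aᴴ`. -/
noncomputable def singularValues {𝕜 : Type*} [RCLike 𝕜] {m : Type*} [Fintype m] [DecidableEq m]
    (A : Matrix m m 𝕜) : m → ℝ :=
  fun i => Real.sqrt ((Matrix.isHermitian_mul_conjTranspose_self A).eigenvalues i)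

/-- The trace norm (nuclear norm) of a square matrix: the sum of its singular values. -/
noncomputable def traceNorm {𝕜 : Type*} [RCLike 𝕜] {m : Type*} [Fintype m] [DecidableEq m]
    (A : Matrix m m 𝕜) : ℝ :=
  ∑ i, singularValues A i

namespace RPartiteAux

open Finset Real
open scoped RealInnerProductSpace

variable {N : Type*} [Fintype N] [DecidableEq N]

/-- Squared Frobenius norm. -/
def frobSq (M : Matrix N N ℝ) : ℝ := ∑ i, ∑ j, (M i j) ^ 2

lemma trace_conjTranspose_mul (M : Matrix N N ℝ) : Matrix.trace (Mᴴ * M) = frobSq M := by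
  simp only [Matrix.trace, Matrix.diag_apply, Matrix.mul_apply, Matrix.conjTranspose_apply,
    star_trivial, frobSq, sq]
  exact Finset.sum_comm

/-- Fibered rewriting of a "same-fiber" double sum. -/
lemma sum_ite_fiber {r : ℕ} (p : N → Fin r) (x : N → ℝ) :
    ∑ i, ∑ j, (if p i = p j then x i * x j else 0)
      = ∑ k, (∑ i, if p i = k then x i else 0) ^ 2 := by
  have e : ∀ i j : N, (if p i = p j then x i * x j else 0)
      = ∑ k, (if p i = k then x i else 0) * (if p j = k then x j else 0) := by
    intro i j
    rcases eq_or_ne (p i) (p j) with h | h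
    · rw [if_pos h,
        Finset.sum_eq_single (p i) (fun k _ hk => by rw [if_neg (Ne.symm hk), zero_mul])
          (by simp)]
      rw [if_pos rfl, if_pos h.symm]
    · rw [if_neg h]
      refine (Finset.sum_eq_zero fun k _ => ?_).symm
      by_cases h1 : p i = k
      · rw [if_neg (show ¬ p j = k from fun h2 => h (h1.trans h2.symm)), mul_zero]
      · rw [if_neg h1, zero_mul]
  calc ∑ i, ∑ j, (if p i = p j then x i * x j else 0)
      = ∑ i, ∑ j, ∑ k, (if p i = k then x i else 0) * (if p j = k then x j else 0) :=
        Finset.sum_congr rfl fun i _ => Finset.sum_congr rfl fun j _ => e i j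
    _ = ∑ i, ∑ k, ∑ j, (if p i = k then x i else 0) * (if p j = k then x j else 0) :=
        Finset.sum_congr rfl fun i _ => Finset.sum_comm
    _ = ∑ k, ∑ i, ∑ j, (if p i = k then x i else 0) * (if p j = k then x j else 0) :=
        Finset.sum_comm
    _ = ∑ k, (∑ i, if p i = k then x i else 0) ^ 2 := by
        refine Finset.sum_congr rfl fun k _ => ?_
        rw [sq, Finset.sum_mul_sum]

section K

variable {n r : ℕ} (p : Fin n → Fin r)

/-- The complete multipartite pattern matrix. -/
def Kmat : Matrix (Fin n) (Fin n) ℝ := Matrix.of fun i j => if p i = p j then 0 else 1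

lemma Kmat_herm : (Kmat p).IsHermitian := by
  ext i j
  simp only [Matrix.conjTranspose_apply, Kmat, Matrix.of_apply, star_trivial]
  by_cases h : p i = p j
  · rw [if_pos h, if_pos h.symm]
  · rw [if_neg h, if_neg fun h2 => h h2.symm]

lemma Kmat_quadform (z : Fin n → ℝ) :
    z ⬝ᵥ ((Kmat p) *ᵥ z)
      = (∑ i, z i) ^ 2 - ∑ k, (∑ i, if p i = k then z i else 0) ^ 2 := by
  have h1 : z ⬝ᵥ ((Kmat p) *ᵥ z)
      = ∑ i, ∑ j, (z i * z j - (if p i = p j then z i * z j else 0)) := by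
    simp only [dotProduct, Matrix.mulVec, dotProduct, Kmat, Matrix.of_apply,
      Finset.mul_sum]
    refine Finset.sum_congr rfl fun i _ => Finset.sum_congr rfl fun j _ => ?_
    by_cases h : p i = p j
    · simp [h]
    · simp [h]
  rw [h1]
  have h2 : ∀ i : Fin n, ∑ j, (z i * z j - (if p i = p j then z i * z j else 0))
      = (∑ j, z i * z j) - ∑ j, (if p i = p j then z i * z j else 0) :=
    fun i => Finset.sum_sub_distrib _ _
  rw [Finset.sum_congr rfl fun i _ => h2 i, Finset.sum_sub_distrib, sum_ite_fiber p z]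
  congr 1
  rw [sq, Finset.sum_mul_sum]

end K

lemma trace_le_sqrt_frob {U V : Matrix N N ℝ} (M : Matrix N N ℝ)
    (hU : Uᴴ * U = 1) (hV : V * Vᴴ = 1) :
    Matrix.trace (Uᴴ * M * V)
      ≤ Real.sqrt (Fintype.card N) * Real.sqrt (frobSq M) := by
  have expand : Matrix.trace (Uᴴ * M * V)
      = ∑ q : N × N, U q.1 q.2 * (M * V) q.1 q.2 := by
    rw [Matrix.mul_assoc]
    simp only [Matrix.trace, Matrix.diag_apply, Matrix.mul_apply, Matrix.conjTranspose_apply,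
      star_trivial]
    rw [Fintype.sum_prod_type]
    exact Finset.sum_comm
  have hcs := Real.sum_mul_le_sqrt_mul_sqrt Finset.univ
      (fun q : N × N => U q.1 q.2) (fun q : N × N => (M * V) q.1 q.2)
  have hU2 : ∑ q : N × N, (U q.1 q.2) ^ 2 = (Fintype.card N : ℝ) := by
    rw [Fintype.sum_prod_type]
    have h := trace_conjTranspose_mul U
    rw [hU, Matrix.trace_one] at h
    exact h.symm
  have hMV : ∑ q : N × N, ((M * V) q.1 q.2) ^ 2 = frobSq M := by
    rw [Fintype.sum_prod_type]
    show frobSq (M * V) = frobSq M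
    rw [← trace_conjTranspose_mul, ← trace_conjTranspose_mul M, Matrix.conjTranspose_mul]
    calc Matrix.trace (Vᴴ * Mᴴ * (M * V))
        = Matrix.trace (Vᴴ * (Mᴴ * (M * V))) := by rw [Matrix.mul_assoc]
      _ = Matrix.trace (Mᴴ * (M * V) * Vᴴ) := Matrix.trace_mul_comm _ _
      _ = Matrix.trace (Mᴴ * M * (V * Vᴴ)) := by
          simp only [Matrix.mul_assoc]
      _ = Matrix.trace (Mᴴ * M) := by rw [hV, Matrix.mul_one]
  rw [expand]
  calc ∑ q : N × N, U q.1 q.2 * (M * V) q.1 q.2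
      ≤ Real.sqrt (∑ q : N × N, (U q.1 q.2) ^ 2)
        * Real.sqrt (∑ q : N × N, ((M * V) q.1 q.2) ^ 2) := hcs
    _ = Real.sqrt (Fintype.card N) * Real.sqrt (frobSq M) := by rw [hU2, hMV]

lemma trace_conj_diag_le {U V Q : Matrix N N ℝ} (d : N → ℝ)
    (hU : Uᴴ * U = 1) (hV : V * Vᴴ = 1) (hQ1 : Qᴴ * Q = 1) (hQ2 : Q * Qᴴ = 1) :
    Matrix.trace (Uᴴ * (Q * Matrix.diagonal d * Qᴴ) * V) ≤ ∑ i, |d i| := by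
  set W : Matrix N N ℝ := Qᴴ * V * (Uᴴ * Q) with hWdef
  have hWW : W * Wᴴ = 1 := by
    have e1 : W * Wᴴ = Qᴴ * (V * (Uᴴ * (Q * (Qᴴ * (U * (Vᴴ * Q)))))) := by
      rw [hWdef]
      simp only [Matrix.conjTranspose_mul, Matrix.conjTranspose_conjTranspose, Matrix.mul_assoc]
    rw [e1, ← Matrix.mul_assoc Q Qᴴ, hQ2, Matrix.one_mul, ← Matrix.mul_assoc Uᴴ U, hU,
      Matrix.one_mul, ← Matrix.mul_assoc V Vᴴ, hV, Matrix.one_mul, hQ1]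
  have htr : Matrix.trace (Uᴴ * (Q * Matrix.diagonal d * Qᴴ) * V)
      = Matrix.trace (W * Matrix.diagonal d) := by
    have e1 : Uᴴ * (Q * Matrix.diagonal d * Qᴴ) * V
        = (Uᴴ * Q) * Matrix.diagonal d * (Qᴴ * V) := by
      simp only [Matrix.mul_assoc]
    rw [e1, Matrix.trace_mul_cycle, hWdef]
  have hdiag : ∀ i : N, |W i i| ≤ 1 := by
    intro i
    have h1 : ∑ j, (W i j) ^ 2 = 1 := by
      have h := congrFun (congrFun hWW i) i
      simpa [Matrix.mul_apply, Matrix.conjTranspose_apply, Matrix.one_apply, sq] using h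
    have h2 : (W i i) ^ 2 ≤ 1 := by
      rw [← h1]
      exact Finset.single_le_sum (f := fun j => (W i j) ^ 2) (fun j _ => sq_nonneg _)
        (Finset.mem_univ i)
    calc |W i i| = Real.sqrt ((W i i) ^ 2) := (Real.sqrt_sq_eq_abs _).symm
      _ ≤ Real.sqrt 1 := Real.sqrt_le_sqrt h2
      _ = 1 := Real.sqrt_one
  rw [htr]
  have e2 : Matrix.trace (W * Matrix.diagonal d) = ∑ i, W i i * d i := by
    simp [Matrix.trace, Matrix.diag_apply, Matrix.mul_diagonal]
  rw [e2]
  calc ∑ i, W i i * d i ≤ ∑ i, |W i i * d i| :=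
        Finset.sum_le_sum fun i _ => le_abs_self _
    _ ≤ ∑ i, |d i| := by
        refine Finset.sum_le_sum fun i _ => ?_
        rw [abs_mul]
        calc |W i i| * |d i| ≤ 1 * |d i| :=
              mul_le_mul_of_nonneg_right (hdiag i) (abs_nonneg _)
          _ = |d i| := one_mul _

/-- Existence of the trace-attaining orthogonal pair (SVD form). -/
lemma exists_trace_eq {n : ℕ} (A : Matrix (Fin n) (Fin n) ℝ) :
    ∃ U V : Matrix (Fin n) (Fin n) ℝ,
      Uᴴ * U = 1 ∧ U * Uᴴ = 1 ∧ Vᴴ * V = 1 ∧ V * Vᴴ = 1 ∧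
      traceNorm A = Matrix.trace (Uᴴ * A * V) := by
  classical
  set hH := Matrix.isHermitian_mul_conjTranspose_self A with hHdef
  set lam : Fin n → ℝ := hH.eigenvalues with hlam
  have hlam0 : ∀ i, 0 ≤ lam i := fun i =>
    (Matrix.posSemidef_self_mul_conjTranspose A).eigenvalues_nonneg i
  set U : Matrix (Fin n) (Fin n) ℝ := (hH.eigenvectorUnitary : Matrix (Fin n) (Fin n) ℝ)
    with hUdef
  have hU1 : Uᴴ * U = 1 := by
    rw [← Matrix.star_eq_conjTranspose]
    exact Matrix.mem_unitaryGroup_iff'.mp hH.eigenvectorUnitary.2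
  have hU2 : U * Uᴴ = 1 := by
    rw [← Matrix.star_eq_conjTranspose]
    exact Matrix.mem_unitaryGroup_iff.mp hH.eigenvectorUnitary.2
  set B : Matrix (Fin n) (Fin n) ℝ := Uᴴ * A with hBdef
  have hBB : B * Bᴴ = Matrix.diagonal lam := by
    have hspec : star U * (A * Aᴴ) * U = Matrix.diagonal (RCLike.ofReal ∘ lam) := by
      have h := hH.conjStarAlgAut_star_eigenvectorUnitary
      rw [Unitary.conjStarAlgAut_star_apply] at h
      exact h
    have e : B * Bᴴ = star U * (A * Aᴴ) * U := by
      rw [hBdef, Matrix.conjTranspose_mul, Matrix.conjTranspose_conjTranspose,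
        Matrix.star_eq_conjTranspose]
      simp only [Matrix.mul_assoc]
    rw [e, hspec]
    congr 1
  have hrowsq : ∀ i, ∑ a, (B i a) ^ 2 = lam i := by
    intro i
    have h := congrFun (congrFun hBB i) i
    simpa [Matrix.mul_apply, Matrix.conjTranspose_apply, Matrix.diagonal_apply_eq, sq] using h
  have hrow0 : ∀ i, lam i = 0 → ∀ a, B i a = 0 := by
    intro i hi a
    have h1 : ∑ a, (B i a) ^ 2 = 0 := by rw [hrowsq i, hi]
    have h2 := (Finset.sum_eq_zero_iff_of_nonneg (fun a _ => sq_nonneg (B i a))).mp h1 a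
      (Finset.mem_univ a)
    exact (pow_eq_zero_iff two_ne_zero).mp h2
  have hBij : ∀ i j, ∑ a, B i a * B j a = Matrix.diagonal lam i j := by
    intro i j
    have h := congrFun (congrFun hBB i) j
    simpa [Matrix.mul_apply, Matrix.conjTranspose_apply] using h
  set sig : Fin n → ℝ := fun i => Real.sqrt (lam i) with hsig
  set v : Fin n → EuclideanSpace ℝ (Fin n) :=
    fun i => (WithLp.equiv 2 (Fin n → ℝ)).symm fun a => (Real.sqrt (lam i))⁻¹ * B i a with hv
  set s : Set (Fin n) := {i | lam i ≠ 0} with hs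
  have hvon : Orthonormal ℝ (s.restrict v) := by
    rw [orthonormal_iff_ite]
    rintro ⟨i, hi⟩ ⟨j, hj⟩
    have hinner : ⟪s.restrict v ⟨i, hi⟩, s.restrict v ⟨j, hj⟩⟫
        = (Real.sqrt (lam i))⁻¹ * (Real.sqrt (lam j))⁻¹ * ∑ a, B i a * B j a := by
      simp only [Set.restrict_apply, Set.restrict, hv, PiLp.inner_apply, RCLike.inner_apply,
        conj_trivial, WithLp.equiv_symm_apply, PiLp.toLp_apply, starRingEnd_apply, star_trivial]
      rw [Finset.mul_sum]
      exact Finset.sum_congr rfl fun a _ => by ring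
    rw [hinner, hBij i j]
    by_cases hij : i = j
    · subst hij
      rw [if_pos rfl, Matrix.diagonal_apply_eq]
      have hpos : 0 < lam i := lt_of_le_of_ne (hlam0 i) (Ne.symm hi)
      have hsne : Real.sqrt (lam i) ≠ 0 := Real.sqrt_ne_zero'.mpr hpos
      rw [← Real.mul_self_sqrt (hlam0 i)]
      field_simp
      rw [Real.sqrt_sq (Real.sqrt_nonneg _)]
    · rw [if_neg (by simpa [Subtype.mk_eq_mk] using hij), Matrix.diagonal_apply_ne _ hij,
        mul_zero]
  obtain ⟨b, hb⟩ := hvon.exists_orthonormalBasis_extension_of_card_eq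
    (by simp [finrank_euclideanSpace])
  set V : Matrix (Fin n) (Fin n) ℝ := Matrix.of (fun a i => b i a) with hVdef
  have hV1 : Vᴴ * V = 1 := by
    ext i j
    have h := orthonormal_iff_ite.mp b.orthonormal i j
    simp only [PiLp.inner_apply, RCLike.inner_apply, conj_trivial, starRingEnd_apply,
      star_trivial] at h
    simp only [Matrix.mul_apply, Matrix.conjTranspose_apply, hVdef, Matrix.of_apply,
      star_trivial, Matrix.one_apply]
    rw [← h]; exact Finset.sum_congr rfl fun _ _ => mul_comm _ _
  have hV2 : V * Vᴴ = 1 := mul_eq_one_comm.mp hV1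
  have hBd : Matrix.diagonal sig * Vᴴ = B := by
    ext i a
    rw [Matrix.diagonal_mul]
    simp only [Matrix.conjTranspose_apply, star_trivial, hVdef, Matrix.of_apply]
    by_cases hi : lam i = 0
    · have hsz : sig i = 0 := by rw [hsig]; simp [hi]
      rw [hsz, zero_mul, hrow0 i hi a]
    · have hbv : b i = v i := hb i hi
      have hpos : 0 < lam i := lt_of_le_of_ne (hlam0 i) (Ne.symm hi)
      have hsne : Real.sqrt (lam i) ≠ 0 := Real.sqrt_ne_zero'.mpr hpos
      rw [hbv]
      simp only [hv, WithLp.equiv_symm_apply, PiLp.toLp_apply, hsig]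
      field_simp
  refine ⟨U, V, hU1, hU2, hV1, hV2, ?_⟩
  have hBV : B * V = Matrix.diagonal sig := by
    rw [← hBd, Matrix.mul_assoc, hV1, Matrix.mul_one]
  have e : Uᴴ * A * V = B * V := by rw [hBdef]
  rw [e, hBV, Matrix.trace_diagonal]
  simp only [traceNorm, singularValues]
  rfl


section eig

variable {n r : ℕ} (p : Fin n → Fin r)

lemma eigen_norm (i : Fin n) :
    ∑ a, (⇑((Kmat_herm p).eigenvectorBasis i)) a * (⇑((Kmat_herm p).eigenvectorBasis i)) a
      = 1 := by
  have h := orthonormal_iff_ite.mp (Kmat_herm p).eigenvectorBasis.orthonormal i i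
  rw [if_pos rfl] at h
  simp only [PiLp.inner_apply, RCLike.inner_apply, conj_trivial] at h
  exact h

lemma eigen_dot_self (i : Fin n) :
    ⇑((Kmat_herm p).eigenvectorBasis i) ⬝ᵥ ((Kmat p) *ᵥ ⇑((Kmat_herm p).eigenvectorBasis i))
      = (Kmat_herm p).eigenvalues i := by
  rw [(Kmat_herm p).mulVec_eigenvectorBasis, dotProduct_smul]
  have hz : (⇑((Kmat_herm p).eigenvectorBasis i)) ⬝ᵥ (⇑((Kmat_herm p).eigenvectorBasis i))
      = 1 := eigen_norm p i
  rw [hz, smul_eq_mul, mul_one]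

lemma eigen_dot_other (i j : Fin n) (hij : i ≠ j) :
    ⇑((Kmat_herm p).eigenvectorBasis i) ⬝ᵥ ((Kmat p) *ᵥ ⇑((Kmat_herm p).eigenvectorBasis j))
      = 0 := by
  rw [(Kmat_herm p).mulVec_eigenvectorBasis, dotProduct_smul]
  have h := orthonormal_iff_ite.mp (Kmat_herm p).eigenvectorBasis.orthonormal i j
  rw [if_neg hij] at h
  have hz : (⇑((Kmat_herm p).eigenvectorBasis i)) ⬝ᵥ (⇑((Kmat_herm p).eigenvectorBasis j))
      = 0 := by
    rw [dotProduct_comm]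
    simpa [dotProduct, PiLp.inner_apply, RCLike.inner_apply, starRingEnd_apply, star_trivial] using h
  rw [hz, smul_eq_mul, mul_zero]

end eig

end RPartiteAux

namespace RPartiteAux

end RPartiteAux

/-- if `n ≥ r ≥ 2` and `A` is an `n × n` nonnegative real `r`-partite matrix with
all entries at most `1`, then `‖A‖_* ≤ (n^(3/2)/2) √(1 - 1/r) + (1 - 1/r) n`. -/
theorem traceNorm_nonneg_r_partite_le {n r : ℕ} (hr : 2 ≤ r) (hn : r ≤ n)
    (A : Matrix (Fin n) (Fin n) ℝ)
    (hnn : ∀ i j, 0 ≤ A i j) (hbd : ∀ i j, A i j ≤ 1)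
    (p : Fin n → Fin r)
    (hpart : ∀ i j, p i = p j → A i j = 0) :
    traceNorm A ≤ (n : ℝ) ^ (3 / 2 : ℝ) / 2 * Real.sqrt (1 - 1 / r) + (1 - 1 / r) * n := by
  classical
  obtain ⟨U, V, hU1, hU2, hV1, hV2, hTN⟩ := RPartiteAux.exists_trace_eq A
  have hr1 : (1:ℝ) ≤ (r:ℝ) := by exact_mod_cast le_trans one_le_two hr
  have hrpos : (0:ℝ) < r := lt_of_lt_of_le one_pos hr1
  have hnpos : (0:ℝ) < n := by
    have h2 : (2:ℝ) ≤ (n:ℝ) := by exact_mod_cast le_trans hr hn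
    linarith
  set c : ℝ := 1 - 1/(r:ℝ) with hcdef
  have hc0 : 0 ≤ c := by
    have h1 : 1/(r:ℝ) ≤ 1 := by rw [div_le_one hrpos]; exact hr1
    rw [hcdef]; linarith
  -- eigenvalue upper bound
  have hμle : ∀ i, (RPartiteAux.Kmat_herm p).eigenvalues i ≤ c * n := by
    intro i
    set z := ⇑((RPartiteAux.Kmat_herm p).eigenvectorBasis i) with hzdef
    have hz1 : ∑ a, z a * z a = 1 := RPartiteAux.eigen_norm p i
    have hdot : z ⬝ᵥ ((RPartiteAux.Kmat p) *ᵥ z) = (RPartiteAux.Kmat_herm p).eigenvalues i :=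
      RPartiteAux.eigen_dot_self p i
    have hq := RPartiteAux.Kmat_quadform p z
    have hfib : ∑ k, (∑ a, if p a = k then z a else 0) = ∑ a, z a := by
      rw [Finset.sum_comm]
      exact Finset.sum_congr rfl fun a _ => by simp
    have hCS1 : (∑ a, z a)^2 ≤ (r:ℝ) * ∑ k, (∑ a, if p a = k then z a else 0)^2 := by
      have h := sq_sum_le_card_mul_sum_sq
        (s := (Finset.univ : Finset (Fin r))) (f := fun k => ∑ a, if p a = k then z a else 0)
      rw [hfib] at h
      simpa using h
    have hCS2 : (∑ a, z a)^2 ≤ (n:ℝ) := by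
      have h := sq_sum_le_card_mul_sum_sq
        (s := (Finset.univ : Finset (Fin n))) (f := z)
      have hsq : ∑ a, (z a)^2 = 1 := by
        rw [← hz1]; exact Finset.sum_congr rfl fun a _ => pow_two (z a)
      rw [hsq] at h
      simpa using h
    have hinv : (∑ a, z a)^2 / (r:ℝ) ≤ ∑ k, (∑ a, if p a = k then z a else 0)^2 := by
      rw [div_le_iff₀ hrpos]
      linarith [hCS1]
    calc (RPartiteAux.Kmat_herm p).eigenvalues i
        = (∑ a, z a)^2 - ∑ k, (∑ a, if p a = k then z a else 0)^2 := by rw [← hdot, hq]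
      _ ≤ (∑ a, z a)^2 - (∑ a, z a)^2 / r := by linarith
      _ = c * (∑ a, z a)^2 := by rw [hcdef]; field_simp
      _ ≤ c * n := mul_le_mul_of_nonneg_left hCS2 hc0
  -- negative on zero-sum vectors
  have honeneg : ∀ z : Fin n → ℝ, (∑ a, z a) = 0 → z ⬝ᵥ ((RPartiteAux.Kmat p) *ᵥ z) ≤ 0 := by
    intro z hz
    rw [RPartiteAux.Kmat_quadform p z, hz]
    have h0 : 0 ≤ ∑ k, (∑ a, if p a = k then z a else 0)^2 :=
      Finset.sum_nonneg fun k _ => sq_nonneg _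
    nlinarith
  -- at most one positive eigenvalue
  have hpos_unique : ∀ i j, i ≠ j → 0 < (RPartiteAux.Kmat_herm p).eigenvalues i →
      0 < (RPartiteAux.Kmat_herm p).eigenvalues j → False := by
    intro i j hij hi hj
    set x := ⇑((RPartiteAux.Kmat_herm p).eigenvectorBasis i) with hxdef
    set y := ⇑((RPartiteAux.Kmat_herm p).eigenvectorBasis j) with hydef
    have hxx := RPartiteAux.eigen_dot_self p i
    have hyy := RPartiteAux.eigen_dot_self p j
    have hxy := RPartiteAux.eigen_dot_other p i j hij
    have hyx := RPartiteAux.eigen_dot_other p j i (Ne.symm hij)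
    by_cases hSx : (∑ a, x a) = 0
    · have h := honeneg x hSx
      rw [hxx] at h
      linarith
    by_cases hSy : (∑ a, y a) = 0
    · have h := honeneg y hSy
      rw [hyy] at h
      linarith
    set Sx := ∑ a, x a with hSxdef
    set Sy := ∑ a, y a with hSydef
    set z : Fin n → ℝ := Sy • x - Sx • y with hzdef
    have hzsum : ∑ a, z a = 0 := by
      simp only [hzdef, Pi.sub_apply, Pi.smul_apply, smul_eq_mul]
      rw [Finset.sum_sub_distrib, ← Finset.mul_sum, ← Finset.mul_sum]
      ring
    have hexp : z ⬝ᵥ ((RPartiteAux.Kmat p) *ᵥ z)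
        = Sy * Sy * (RPartiteAux.Kmat_herm p).eigenvalues i
          + Sx * Sx * (RPartiteAux.Kmat_herm p).eigenvalues j := by
      rw [hzdef, Matrix.mulVec_sub, Matrix.mulVec_smul, Matrix.mulVec_smul,
        sub_dotProduct, smul_dotProduct, smul_dotProduct,
        dotProduct_sub, dotProduct_sub, dotProduct_smul,
        dotProduct_smul, dotProduct_smul, dotProduct_smul,
        hxx, hyy, hxy, hyx]
      simp only [smul_eq_mul]
      ring
    have hneg := honeneg z hzsum
    rw [hexp] at hneg
    have h1 : 0 < Sy * Sy * (RPartiteAux.Kmat_herm p).eigenvalues i :=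
      mul_pos (mul_self_pos.mpr hSy) hi
    have h2 : 0 < Sx * Sx * (RPartiteAux.Kmat_herm p).eigenvalues j :=
      mul_pos (mul_self_pos.mpr hSx) hj
    linarith
  -- spectral decomposition of K
  set Q : Matrix (Fin n) (Fin n) ℝ :=
    ((RPartiteAux.Kmat_herm p).eigenvectorUnitary : Matrix (Fin n) (Fin n) ℝ) with hQdef
  have hQ1 : Qᴴ * Q = 1 := by
    rw [hQdef, ← Matrix.star_eq_conjTranspose]
    exact Matrix.mem_unitaryGroup_iff'.mp (RPartiteAux.Kmat_herm p).eigenvectorUnitary.2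
  have hQ2 : Q * Qᴴ = 1 := by
    rw [hQdef, ← Matrix.star_eq_conjTranspose]
    exact Matrix.mem_unitaryGroup_iff.mp (RPartiteAux.Kmat_herm p).eigenvectorUnitary.2
  have hKspec : RPartiteAux.Kmat p
      = Q * Matrix.diagonal ((RPartiteAux.Kmat_herm p).eigenvalues) * Qᴴ := by
    have h := (RPartiteAux.Kmat_herm p).spectral_theorem
    rw [Unitary.conjStarAlgAut_apply, Matrix.star_eq_conjTranspose] at h
    rw [hQdef]
    convert h using 3 <;> rfl
  have htrK : Matrix.trace (RPartiteAux.Kmat p) = 0 := by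
    simp [RPartiteAux.Kmat, Matrix.trace, Matrix.diag_apply]
  have hμsum : ∑ i, (RPartiteAux.Kmat_herm p).eigenvalues i = 0 := by
    have h : Matrix.trace (RPartiteAux.Kmat p)
        = ∑ i, (RPartiteAux.Kmat_herm p).eigenvalues i := by
      conv_lhs => rw [hKspec]
      rw [Matrix.trace_mul_cycle, hQ1, Matrix.one_mul, Matrix.trace_diagonal]
    rw [h] at htrK
    exact htrK
  have habs : ∑ i, |(RPartiteAux.Kmat_herm p).eigenvalues i| ≤ 2 * (c * n) := by
    have hmax : ∑ i, max ((RPartiteAux.Kmat_herm p).eigenvalues i) 0 ≤ c * n := by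
      by_cases hex : ∃ i, 0 < (RPartiteAux.Kmat_herm p).eigenvalues i
      · obtain ⟨i0, hi0⟩ := hex
        have he : ∑ i, max ((RPartiteAux.Kmat_herm p).eigenvalues i) 0
            = max ((RPartiteAux.Kmat_herm p).eigenvalues i0) 0 := by
          refine Finset.sum_eq_single i0 (fun j _ hj => ?_)
            (fun h => absurd (Finset.mem_univ i0) h)
          have hnpos' : ¬ 0 < (RPartiteAux.Kmat_herm p).eigenvalues j :=
            fun hj' => hpos_unique j i0 hj hj' hi0
          exact max_eq_right (le_of_not_gt hnpos')
        rw [he, max_eq_left (le_of_lt hi0)]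
        exact hμle i0
      · push_neg at hex
        have he : ∑ i, max ((RPartiteAux.Kmat_herm p).eigenvalues i) 0 = 0 :=
          Finset.sum_eq_zero fun i _ => max_eq_right (hex i)
        rw [he]
        exact mul_nonneg hc0 (le_of_lt hnpos)
    have heq : ∑ i, |(RPartiteAux.Kmat_herm p).eigenvalues i|
        = 2 * (∑ i, max ((RPartiteAux.Kmat_herm p).eigenvalues i) 0)
          - ∑ i, (RPartiteAux.Kmat_herm p).eigenvalues i := by
      rw [Finset.mul_sum, ← Finset.sum_sub_distrib]
      refine Finset.sum_congr rfl fun i _ => ?_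
      rcases le_total ((RPartiteAux.Kmat_herm p).eigenvalues i) 0 with h | h
      · rw [abs_of_nonpos h, max_eq_right h]; ring
      · rw [abs_of_nonneg h, max_eq_left h]; ring
    rw [heq, hμsum, sub_zero]
    linarith
  -- Frobenius bound on M
  set M : Matrix (Fin n) (Fin n) ℝ := A - (2⁻¹ : ℝ) • (RPartiteAux.Kmat p) with hMdef
  have hfrob : RPartiteAux.frobSq M ≤ c * (n:ℝ)^2 / 4 := by
    have hbound : ∀ i j, (M i j)^2 ≤ (if p i = p j then 0 else (4⁻¹ : ℝ)) := by
      intro i j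
      by_cases h : p i = p j
      · simp [hMdef, RPartiteAux.Kmat, h, hpart i j h]
      · simp only [hMdef, RPartiteAux.Kmat, Matrix.sub_apply, Matrix.smul_apply,
          Matrix.of_apply, if_neg h, smul_eq_mul, mul_one]
        nlinarith [hnn i j, hbd i j]
    have hstep : RPartiteAux.frobSq M ≤ ∑ i, ∑ j, (if p i = p j then (0:ℝ) else 4⁻¹) :=
      Finset.sum_le_sum fun i _ => Finset.sum_le_sum fun j _ => hbound i j
    have hsplit2 : ∀ i j : Fin n, (if p i = p j then (0:ℝ) else 4⁻¹)
        = 4⁻¹ * (1 - if p i = p j then (1:ℝ) else 0) := by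
      intro i j; by_cases h : p i = p j <;> simp [h]
    have hcount : ∑ i, ∑ j, (if p i = p j then (0:ℝ) else 4⁻¹)
        = 4⁻¹ * ((n:ℝ)^2 - ∑ k, (∑ i, if p i = k then (1:ℝ) else 0)^2) := by
      have hf := RPartiteAux.sum_ite_fiber p (fun _ => (1:ℝ))
      simp only [one_mul] at hf
      simp_rw [hsplit2, ← Finset.mul_sum]
      congr 1
      rw [← hf]
      simp_rw [Finset.sum_sub_distrib]
      congr 1
      simp [Finset.sum_const, Finset.card_univ, sq]
    have hone : ∑ k, (∑ i, if p i = k then (1:ℝ) else 0) = (n:ℝ) := by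
      rw [Finset.sum_comm]
      have he : ∀ a : Fin n, ∑ k, (if p a = k then (1:ℝ) else 0) = 1 := fun a => by simp
      rw [Finset.sum_congr rfl fun a _ => he a]
      simp
    have hCS : (n:ℝ)^2 ≤ (r:ℝ) * ∑ k, (∑ i, if p i = k then (1:ℝ) else 0)^2 := by
      have h := sq_sum_le_card_mul_sum_sq
        (s := (Finset.univ : Finset (Fin r))) (f := fun k => ∑ i, if p i = k then (1:ℝ) else 0)
      rw [hone] at h
      simpa using h
    have hK2 : (n:ℝ)^2 / (r:ℝ) ≤ ∑ k, (∑ i, if p i = k then (1:ℝ) else 0)^2 := by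
      rw [div_le_iff₀ hrpos]; linarith
    calc RPartiteAux.frobSq M ≤ ∑ i, ∑ j, (if p i = p j then (0:ℝ) else 4⁻¹) := hstep
      _ = 4⁻¹ * ((n:ℝ)^2 - ∑ k, (∑ i, if p i = k then (1:ℝ) else 0)^2) := hcount
      _ ≤ 4⁻¹ * ((n:ℝ)^2 - (n:ℝ)^2/(r:ℝ)) := by linarith
      _ = c * (n:ℝ)^2 / 4 := by rw [hcdef]; field_simp
  -- splitting the trace
  have hAsum : A = M + (2⁻¹ : ℝ) • (RPartiteAux.Kmat p) := by
    rw [hMdef]; abel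
  have hsplit : Matrix.trace (Uᴴ * A * V)
      = Matrix.trace (Uᴴ * M * V)
        + 2⁻¹ * Matrix.trace (Uᴴ * (RPartiteAux.Kmat p) * V) := by
    conv_lhs => rw [hAsum]
    rw [Matrix.mul_add, Matrix.add_mul, Matrix.trace_add]
    congr 1
    rw [Matrix.mul_smul, Matrix.smul_mul, Matrix.trace_smul, smul_eq_mul]
  -- bound each piece
  have h1 : Matrix.trace (Uᴴ * M * V) ≤ Real.sqrt (n:ℝ) * (Real.sqrt c * ((n:ℝ)/2)) := by
    have h := RPartiteAux.trace_le_sqrt_frob M hU1 hV2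
    have hcard : ((Fintype.card (Fin n)) : ℝ) = (n:ℝ) := by simp
    have hsq : Real.sqrt (RPartiteAux.frobSq M) ≤ Real.sqrt c * ((n:ℝ)/2) := by
      have h2 : Real.sqrt (RPartiteAux.frobSq M) ≤ Real.sqrt (c * (n:ℝ)^2/4) :=
        Real.sqrt_le_sqrt hfrob
      have h3 : Real.sqrt (c * (n:ℝ)^2/4) = Real.sqrt c * ((n:ℝ)/2) := by
        rw [show c * (n:ℝ)^2/4 = c * ((n:ℝ)/2)^2 by ring, Real.sqrt_mul hc0,
          Real.sqrt_sq (by positivity)]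
      linarith
    rw [hcard] at h
    calc Matrix.trace (Uᴴ * M * V) ≤ Real.sqrt (n:ℝ) * Real.sqrt (RPartiteAux.frobSq M) := h
      _ ≤ Real.sqrt (n:ℝ) * (Real.sqrt c * ((n:ℝ)/2)) :=
        mul_le_mul_of_nonneg_left hsq (Real.sqrt_nonneg _)
  have h2 : Matrix.trace (Uᴴ * (RPartiteAux.Kmat p) * V) ≤ 2 * (c * n) := by
    calc Matrix.trace (Uᴴ * (RPartiteAux.Kmat p) * V)
        = Matrix.trace (Uᴴ * (Q * Matrix.diagonal ((RPartiteAux.Kmat_herm p).eigenvalues) * Qᴴ)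
            * V) := by rw [← hKspec]
      _ ≤ ∑ i, |(RPartiteAux.Kmat_herm p).eigenvalues i| :=
          RPartiteAux.trace_conj_diag_le _ hU1 hV2 hQ1 hQ2
      _ ≤ 2 * (c * n) := habs
  have hrpow : (n:ℝ) ^ (3/2 : ℝ) = Real.sqrt (n:ℝ) * (n:ℝ) := by
    rw [show (3/2 : ℝ) = 1/2 + 1 by norm_num, Real.rpow_add hnpos, Real.rpow_one,
      ← Real.sqrt_eq_rpow]
  have hmain : Real.sqrt (n:ℝ) * (Real.sqrt c * ((n:ℝ)/2))
      = (n:ℝ) ^ (3/2 : ℝ) / 2 * Real.sqrt c := by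
    rw [hrpow]; ring
  rw [hTN, hsplit]
  have hfinal : Matrix.trace (Uᴴ * M * V)
      + 2⁻¹ * Matrix.trace (Uᴴ * (RPartiteAux.Kmat p) * V)
      ≤ (n:ℝ) ^ (3/2 : ℝ) / 2 * Real.sqrt c + c * n := by
    have h2' : 2⁻¹ * Matrix.trace (Uᴴ * (RPartiteAux.Kmat p) * V) ≤ c * n := by
      have hh := mul_le_mul_of_nonneg_left h2 (by norm_num : (0:ℝ) ≤ 2⁻¹)
      calc 2⁻¹ * Matrix.trace (Uᴴ * (RPartiteAux.Kmat p) * V) ≤ 2⁻¹ * (2 * (c * ↑n)) := hh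
        _ = c * ↑n := by ring
    have h1' : Matrix.trace (Uᴴ * M * V) ≤ (n:ℝ) ^ (3/2 : ℝ) / 2 * Real.sqrt c := by
      rw [← hmain]; exact h1
    linarith
  exact hfinal
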